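/- arXiv:2512.06160 — 2 statements merged into one kernel-verified Lean document; each statement's English description precedes it below -/
import Mathlib

section
/- Let G be a group and let A be a ring graded by G, with homogeneous components (A_g)_{g∈G} (so A is the internal direct sum of the additive subgroups A_g and A_g·A_h ⊆ A_{gh} for all g, h ∈ G). Suppose A carries a graded involution: an additive map * : A → A with (ab)* = b*a* and (a*)* = a for all a, b ∈ A, such that (A_g)* ⊆ A_g for every g ∈ G. If a ∈ A_g and b ∈ A_h are homogeneous elements with ab ≠ 0, then gh = hg. (This is the precise content of the claim that the support of a G-graded algebra admitting a graded involution is central/commutative.) -/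
/-- A nonzero element lies in at most one component of an internal direct sum. -/
lemma mem_unique {G : Type*} [DecidableEq G] {A : Type*} [Ring A]
    (𝒜 : G → AddSubgroup A) (hinternal : DirectSum.IsInternal 𝒜)
    {g₁ g₂ : G} {x : A} (hx : x ≠ 0) (h1 : x ∈ 𝒜 g₁) (h2 : x ∈ 𝒜 g₂) : g₁ = g₂ := by
  by_contra hne
  have : (DirectSum.of (fun i => 𝒜 i) g₁ ⟨x, h1⟩ : DirectSum G fun i => 𝒜 i)
      = DirectSum.of (fun i => 𝒜 i) g₂ ⟨x, h2⟩ := by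
    apply hinternal.injective
    simp [DirectSum.coeAddMonoidHom_of]
  have := DFunLike.congr_fun this g₁
  rw [DirectSum.of_eq_same, DirectSum.of_eq_of_ne _ _ _ hne] at this
  exact hx (by simpa using congrArg Subtype.val this)

/-- Let `A` be a ring graded by a group `G` (internal direct sum of additive
subgroups `𝒜 g` with `𝒜 g * 𝒜 h ⊆ 𝒜 (g*h)`) admitting a graded involution,
i.e. an additive map `star` with `star (a*b) = star b * star a`,
`star (star a) = a` and `star (𝒜 g) ⊆ 𝒜 g` for all `g`.  If `a ∈ 𝒜 g` and
`b ∈ 𝒜 h` are homogeneous elements with `a * b ≠ 0`, then `g * h = h * g`. -/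
theorem stmt5 {G : Type*} [Group G] [DecidableEq G] {A : Type*} [Ring A]
    (𝒜 : G → AddSubgroup A)
    (hinternal : DirectSum.IsInternal 𝒜)
    (hmul : ∀ g h : G, ∀ a ∈ 𝒜 g, ∀ b ∈ 𝒜 h, a * b ∈ 𝒜 (g * h))
    (star : A →+ A)
    (hstar_mul : ∀ a b : A, star (a * b) = star b * star a)
    (hstar_invol : ∀ a : A, star (star a) = a)
    (hstar_graded : ∀ g : G, ∀ a ∈ 𝒜 g, star a ∈ 𝒜 g)
    {g h : G} {a b : A} (ha : a ∈ 𝒜 g) (hb : b ∈ 𝒜 h) (hab : a * b ≠ 0) :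
    g * h = h * g := by
  have hne : star (a * b) ≠ 0 := fun H => hab (by rw [← hstar_invol (a * b), H, map_zero])
  have h1 : star (a * b) ∈ 𝒜 (g * h) :=
    hstar_graded _ _ (hmul g h a ha b hb)
  have h2 : star (a * b) ∈ 𝒜 (h * g) := by
    rw [hstar_mul]
    exact hmul h g _ (hstar_graded h b hb) _ (hstar_graded g a ha)
  exact mem_unique 𝒜 hinternal hne h1 h2
end

section
/- Let F be a field and let A be an associative F-algebra equipped with an F-linear involution * (so (xy)* = y*x* and (x*)* = x). Suppose u, a ∈ A satisfy: u² = u, u* = u, u·a = a, a·u = 0, a*·a = 0, and a·a* ≠ 0. Then the four elements u, a, a*, a·a* are linearly independent, their F-span S is closed under multiplication and under *, and the linear map φ : S → M₃(F) determined by φ(u) = e₁₁ + e₃₃, φ(a) = e₁₂, φ(a*) = e₂₃, φ(a·a*) = e₁₃ is an injective (non-unital) F-algebra homomorphism onto the subalgebra M₄ = F(e₁₁+e₃₃) + Fe₁₂ + Fe₂₃ + Fe₁₃ of 3×3 upper triangular matrices which intertwines * with the reflection involution ρ, i.e., φ(x*) = ρ(φ(x)) for all x ∈ S. -/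
/-- The reflection involution on `3 × 3` matrices, reflecting a matrix along
its secondary diagonal: `ρ(M)_{ij} = M_{(4-j)(4-i)}` in 1-based indexing. -/
def reflectionInvolution {F : Type*} (M : Matrix (Fin 3) (Fin 3) F) :
    Matrix (Fin 3) (Fin 3) F :=
  fun i j => M (2 - j) (2 - i)

lemma lincomb_symm {F M : Type*} [Field F] [AddCommGroup M] [Module F M]
    (v : Fin 4 → M) (f : Fin 4 → F) :
    Finsupp.linearCombination F v (Finsupp.equivFunOnFinite.symm f) = ∑ i, f i • v i := by
  rw [Finsupp.linearCombination_apply, Finsupp.sum_fintype] <;> simp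

set_option maxHeartbeats 1000000 in
/-- Let `A` be an `F`-algebra with an `F`-linear involution `s`, and let
`u, a ∈ A` satisfy `u² = u`, `s u = u`, `u·a = a`, `a·u = 0`, `s a · a = 0`
and `a · s a ≠ 0`.  Then `u, a, s a, a·s a` are linearly independent, their
span `S` is closed under multiplication and under `s`, and the linear map
`φ : S → M₃(F)` with `φ(u) = e₁₁ + e₃₃`, `φ(a) = e₁₂`, `φ(s a) = e₂₃`,
`φ(a·s a) = e₁₃` is an injective (non-unital) algebra homomorphism onto the
subalgebra `M₄ = F(e₁₁+e₃₃) + Fe₁₂ + Fe₂₃ + Fe₁₃` of upper triangular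
matrices, intertwining `s` with the reflection involution. -/
theorem stmt9 {F A : Type*} [Field F] [Ring A] [Algebra F A]
    (s : A →ₗ[F] A)
    (hs_mul : ∀ x y : A, s (x * y) = s y * s x)
    (hs_invol : ∀ x : A, s (s x) = x)
    (u a : A)
    (hu_idem : u * u = u) (hu_sym : s u = u)
    (hua : u * a = a) (hau : a * u = 0)
    (hsaa : s a * a = 0) (hasa : a * s a ≠ 0) :
    LinearIndependent F ![u, a, s a, a * s a] ∧
    (∀ x ∈ Submodule.span F ({u, a, s a, a * s a} : Set A),
      ∀ y ∈ Submodule.span F ({u, a, s a, a * s a} : Set A),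
        x * y ∈ Submodule.span F ({u, a, s a, a * s a} : Set A)) ∧
    (∀ x ∈ Submodule.span F ({u, a, s a, a * s a} : Set A),
      s x ∈ Submodule.span F ({u, a, s a, a * s a} : Set A)) ∧
    ∃ φ : (Submodule.span F ({u, a, s a, a * s a} : Set A)) →ₗ[F]
        Matrix (Fin 3) (Fin 3) F,
      Function.Injective φ ∧
      (∀ (x y : A) (hx : x ∈ Submodule.span F ({u, a, s a, a * s a} : Set A))
          (hy : y ∈ Submodule.span F ({u, a, s a, a * s a} : Set A))
          (hxy : x * y ∈ Submodule.span F ({u, a, s a, a * s a} : Set A)),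
        φ ⟨x * y, hxy⟩ = φ ⟨x, hx⟩ * φ ⟨y, hy⟩) ∧
      (∀ (x : A) (hx : x ∈ Submodule.span F ({u, a, s a, a * s a} : Set A))
          (hsx : s x ∈ Submodule.span F ({u, a, s a, a * s a} : Set A)),
        φ ⟨s x, hsx⟩ = reflectionInvolution (φ ⟨x, hx⟩)) ∧
      φ ⟨u, Submodule.subset_span (by simp)⟩
        = Matrix.single 0 0 (1 : F) + Matrix.single 2 2 1 ∧
      φ ⟨a, Submodule.subset_span (by simp)⟩ = Matrix.single 0 1 1 ∧
      φ ⟨s a, Submodule.subset_span (by simp)⟩ = Matrix.single 1 2 1 ∧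
      φ ⟨a * s a, Submodule.subset_span (by simp)⟩
        = Matrix.single 0 2 1 ∧
      LinearMap.range φ = Submodule.span F
        ({Matrix.single 0 0 (1 : F) + Matrix.single 2 2 1,
          Matrix.single 0 1 1, Matrix.single 1 2 1,
          Matrix.single 0 2 1} : Set (Matrix (Fin 3) (Fin 3) F)) := by
  classical
  -- basic multiplicative relations
  have hbu : s a * u = s a := by
    have h := congrArg s hua; rwa [hs_mul, hu_sym] at h
  have hub : u * s a = 0 := by
    have h := congrArg s hau; rwa [hs_mul, hu_sym, map_zero] at h
  have haa : a * a = 0 := by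
    have h1 : a * a = a * u * a := by rw [mul_assoc, hua]
    rw [h1, hau, zero_mul]
  have hbb : s a * s a = 0 := by
    have h := congrArg s haa; rwa [hs_mul, map_zero] at h
  have hsc : s (a * s a) = a * s a := by rw [hs_mul, hs_invol]
  have huc : u * (a * s a) = a * s a := by rw [← mul_assoc, hua]
  have hcu : (a * s a) * u = a * s a := by rw [mul_assoc, hbu]
  have hac : a * (a * s a) = 0 := by rw [← mul_assoc, haa, zero_mul]
  have hca : (a * s a) * a = 0 := by rw [mul_assoc, hsaa, mul_zero]
  have hbc : s a * (a * s a) = 0 := by rw [← mul_assoc, hsaa, zero_mul]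
  have hcb : (a * s a) * s a = 0 := by rw [mul_assoc, hbb, mul_zero]
  have hcc : (a * s a) * (a * s a) = 0 := by rw [mul_assoc, hbc, mul_zero]
  have ha0 : a ≠ 0 := fun h => hasa (by rw [h, zero_mul])
  set S := Submodule.span F ({u, a, s a, a * s a} : Set A) with hSdef
  set W := Submodule.span F (Set.range ![u, a, s a, a * s a]) with hWdef
  have hrange : Set.range ![u, a, s a, a * s a] = ({u, a, s a, a * s a} : Set A) := by
    ext x
    constructor
    · rintro ⟨i, rfl⟩; fin_cases i <;> simp
    · rintro (rfl | rfl | rfl | rfl)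
      exacts [⟨0, rfl⟩, ⟨1, rfl⟩, ⟨2, rfl⟩, ⟨3, rfl⟩]
  have hSW : S = W := by rw [hSdef, hWdef, hrange]
  have hsum : ∀ f : Fin 4 → F,
      ∑ i, f i • (![u, a, s a, a * s a]) i
        = f 0 • u + f 1 • a + f 2 • s a + f 3 • (a * s a) := by
    intro f; simp [Fin.sum_univ_four]
  have hmem : ∀ x : A, x ∈ S ↔ ∃ α β γ δ : F,
      α • u + β • a + γ • s a + δ • (a * s a) = x := by
    intro x
    rw [hSW, hWdef, Submodule.mem_span_range_iff_exists_fun]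
    constructor
    · rintro ⟨f, hf⟩
      exact ⟨f 0, f 1, f 2, f 3, by rw [← hsum]; exact hf⟩
    · rintro ⟨α, β, γ, δ, h⟩
      exact ⟨![α, β, γ, δ], by rw [hsum]; simpa using h⟩
  have hmemC : ∀ α β γ δ : F, α • u + β • a + γ • s a + δ • (a * s a) ∈ S :=
    fun α β γ δ => (hmem _).mpr ⟨α, β, γ, δ, rfl⟩
  -- the multiplication rule in A
  have hmul4 : ∀ α β γ δ α' β' γ' δ' : F,
      (α • u + β • a + γ • s a + δ • (a * s a)) *
        (α' • u + β' • a + γ' • s a + δ' • (a * s a))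
      = (α * α') • u + (α * β') • a + (γ * α') • s a
          + (β * γ' + α * δ' + δ * α') • (a * s a) := by
    intro α β γ δ α' β' γ' δ'
    simp only [mul_add, add_mul, smul_mul_smul_comm, hu_idem, hua, hau, hub, hbu, haa, hbb,
      hsaa, huc, hcu, hac, hca, hbc, hcb, hcc, smul_zero, add_zero, zero_add]
    module
  -- the involution rule in A
  have hs4 : ∀ α β γ δ : F,
      s (α • u + β • a + γ • s a + δ • (a * s a))
      = α • u + γ • a + β • s a + δ • (a * s a) := by
    intro α β γ δ
    simp only [map_add, map_smul, hu_sym, hs_invol, hsc]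
    module
  -- linear independence in A
  have key0 : ∀ g : Fin 4 → F,
      g 0 • u + g 1 • a + g 2 • s a + g 3 • (a * s a) = 0 → ∀ i, g i = 0 := by
    intro g hg
    have h0 : g 0 = 0 := by
      have h := congrArg (· * a) hg
      simp only [add_mul, smul_mul_assoc, hua, haa, hsaa, hca, smul_zero, add_zero,
        zero_mul] at h
      rcases smul_eq_zero.mp h with h | h
      · exact h
      · exact absurd h ha0
    have h1 : g 1 = 0 := by
      have h := congrArg (· * s a) hg
      simp only [add_mul, smul_mul_assoc, hub, hbb, hcb, smul_zero, zero_add, add_zero,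
        zero_mul] at h
      rcases smul_eq_zero.mp h with h | h
      · exact h
      · exact absurd h hasa
    have h2 : g 2 = 0 := by
      have h := congrArg (a * ·) hg
      simp only [mul_add, mul_smul_comm, hau, haa, hac, smul_zero, zero_add, add_zero,
        mul_zero] at h
      rcases smul_eq_zero.mp h with h | h
      · exact h
      · exact absurd h hasa
    have h3 : g 3 = 0 := by
      rw [h0, h1, h2] at hg
      simp only [zero_smul, zero_add] at hg
      rcases smul_eq_zero.mp hg with h | h
      · exact h
      · exact absurd h hasa
    intro i; fin_cases i <;> assumption
  have hli : LinearIndependent F ![u, a, s a, a * s a] := by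
    rw [Fintype.linearIndependent_iff]
    intro g hg
    rw [hsum g] at hg
    exact key0 g hg
  -- the matrix side
  set E0 : Matrix (Fin 3) (Fin 3) F :=
    Matrix.single 0 0 (1 : F) + Matrix.single 2 2 1 with hE0d
  set E1 : Matrix (Fin 3) (Fin 3) F := Matrix.single 0 1 (1 : F) with hE1d
  set E2 : Matrix (Fin 3) (Fin 3) F := Matrix.single 1 2 (1 : F) with hE2d
  set E3 : Matrix (Fin 3) (Fin 3) F := Matrix.single 0 2 (1 : F) with hE3d
  have p00 : E0 * E0 = E0 := by
    rw [hE0d]; rw [add_mul, mul_add, mul_add]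
    rw [Matrix.single_mul_single_same, Matrix.single_mul_single_of_ne _ _ _ _ (by decide : (0 : Fin 3) ≠ 2),
      Matrix.single_mul_single_of_ne _ _ _ _ (by decide : (2 : Fin 3) ≠ 0), Matrix.single_mul_single_same]
    simp
  have p01 : E0 * E1 = E1 := by
    rw [hE0d, hE1d, add_mul, Matrix.single_mul_single_same,
      Matrix.single_mul_single_of_ne _ _ _ _ (by decide : (2 : Fin 3) ≠ 0)]
    simp
  have p02 : E0 * E2 = 0 := by
    rw [hE0d, hE2d, add_mul, Matrix.single_mul_single_of_ne _ _ _ _ (by decide : (0 : Fin 3) ≠ 1),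
      Matrix.single_mul_single_of_ne _ _ _ _ (by decide : (2 : Fin 3) ≠ 1)]
    simp
  have p03 : E0 * E3 = E3 := by
    rw [hE0d, hE3d, add_mul, Matrix.single_mul_single_same,
      Matrix.single_mul_single_of_ne _ _ _ _ (by decide : (2 : Fin 3) ≠ 0)]
    simp
  have p10 : E1 * E0 = 0 := by
    rw [hE0d, hE1d, mul_add, Matrix.single_mul_single_of_ne _ _ _ _ (by decide : (1 : Fin 3) ≠ 0),
      Matrix.single_mul_single_of_ne _ _ _ _ (by decide : (1 : Fin 3) ≠ 2)]
    simp
  have p11 : E1 * E1 = 0 := by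
    rw [hE1d, Matrix.single_mul_single_of_ne _ _ _ _ (by decide : (1 : Fin 3) ≠ 0)]
  have p12 : E1 * E2 = E3 := by
    rw [hE1d, hE2d, hE3d, Matrix.single_mul_single_same]
    norm_num
  have p13 : E1 * E3 = 0 := by
    rw [hE1d, hE3d, Matrix.single_mul_single_of_ne _ _ _ _ (by decide : (1 : Fin 3) ≠ 0)]
  have p20 : E2 * E0 = E2 := by
    rw [hE0d, hE2d, mul_add, Matrix.single_mul_single_of_ne _ _ _ _ (by decide : (2 : Fin 3) ≠ 0),
      Matrix.single_mul_single_same]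
    simp
  have p21 : E2 * E1 = 0 := by
    rw [hE1d, hE2d, Matrix.single_mul_single_of_ne _ _ _ _ (by decide : (2 : Fin 3) ≠ 0)]
  have p22 : E2 * E2 = 0 := by
    rw [hE2d, Matrix.single_mul_single_of_ne _ _ _ _ (by decide : (2 : Fin 3) ≠ 1)]
  have p23 : E2 * E3 = 0 := by
    rw [hE2d, hE3d, Matrix.single_mul_single_of_ne _ _ _ _ (by decide : (2 : Fin 3) ≠ 0)]
  have p30 : E3 * E0 = E3 := by
    rw [hE0d, hE3d, mul_add, Matrix.single_mul_single_of_ne _ _ _ _ (by decide : (2 : Fin 3) ≠ 0),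
      Matrix.single_mul_single_same]
    simp
  have p31 : E3 * E1 = 0 := by
    rw [hE1d, hE3d, Matrix.single_mul_single_of_ne _ _ _ _ (by decide : (2 : Fin 3) ≠ 0)]
  have p32 : E3 * E2 = 0 := by
    rw [hE2d, hE3d, Matrix.single_mul_single_of_ne _ _ _ _ (by decide : (2 : Fin 3) ≠ 1)]
  have p33 : E3 * E3 = 0 := by
    rw [hE3d, Matrix.single_mul_single_of_ne _ _ _ _ (by decide : (2 : Fin 3) ≠ 0)]
  have hEmul : ∀ α β γ δ α' β' γ' δ' : F,
      (α • E0 + β • E1 + γ • E2 + δ • E3) * (α' • E0 + β' • E1 + γ' • E2 + δ' • E3)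
      = (α * α') • E0 + (α * β') • E1 + (γ * α') • E2
          + (β * γ' + α * δ' + δ * α') • E3 := by
    intro α β γ δ α' β' γ' δ'
    simp only [mul_add, add_mul, smul_mul_smul_comm, p00, p01, p02, p03, p10, p11, p12,
      p13, p20, p21, p22, p23, p30, p31, p32, p33, smul_zero, add_zero, zero_add]
    module
  have hρ4 : ∀ α β γ δ : F,
      reflectionInvolution (α • E0 + β • E1 + γ • E2 + δ • E3)
      = α • E0 + γ • E1 + β • E2 + δ • E3 := by
    intro α β γ δ
    ext i j
    simp only [reflectionInvolution, hE0d, hE1d, hE2d, hE3d, Matrix.add_apply,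
      Matrix.smul_apply, Matrix.single, Matrix.of_apply, smul_eq_mul]
    fin_cases i <;> fin_cases j <;> simp
  have hE04 : ∀ α β γ δ : F, α • E0 + β • E1 + γ • E2 + δ • E3 = 0 →
      α = 0 ∧ β = 0 ∧ γ = 0 ∧ δ = 0 := by
    intro α β γ δ hf
    have h00 := congrFun (congrFun hf 0) 0
    have h01 := congrFun (congrFun hf 0) 1
    have h12 := congrFun (congrFun hf 1) 2
    have h02 := congrFun (congrFun hf 0) 2
    simp [hE0d, hE1d, hE2d, hE3d] at h00 h01 h12 h02
    exact ⟨h00, h01, h12, h02⟩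
  -- the linear map φ
  set Ev : Fin 4 → Matrix (Fin 3) (Fin 3) F := ![E0, E1, E2, E3] with hEvd
  set φ : S →ₗ[F] Matrix (Fin 3) (Fin 3) F :=
    (Finsupp.linearCombination F Ev).comp
      (hli.repr.comp (LinearEquiv.ofEq S W hSW).toLinearMap) with hφd
  have key : ∀ (α β γ δ : F) (x : A) (hx : x ∈ S),
      α • u + β • a + γ • s a + δ • (a * s a) = x →
      φ ⟨x, hx⟩ = α • E0 + β • E1 + γ • E2 + δ • E3 := by
    intro α β γ δ x hx hfx
    have hx' : x ∈ W := hSW ▸ hx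
    have h1 : hli.repr ((LinearEquiv.ofEq S W hSW) ⟨x, hx⟩)
        = Finsupp.equivFunOnFinite.symm ![α, β, γ, δ] := by
      apply hli.repr_eq
      rw [lincomb_symm, hsum]
      simpa using hfx
    rw [hφd]
    simp only [LinearMap.comp_apply, LinearEquiv.coe_toLinearMap]
    rw [h1, lincomb_symm]
    simp [hEvd, Fin.sum_univ_four]
  refine ⟨hli, ?_, ?_, φ, ?_, ?_, ?_, ?_, ?_, ?_, ?_, ?_⟩
  · -- closed under multiplication
    intro x hx y hy
    obtain ⟨α, β, γ, δ, hfx⟩ := (hmem x).mp hx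
    obtain ⟨α', β', γ', δ', hgy⟩ := (hmem y).mp hy
    rw [← hfx, ← hgy, hmul4]
    exact hmemC _ _ _ _
  · -- closed under s
    intro x hx
    obtain ⟨α, β, γ, δ, hfx⟩ := (hmem x).mp hx
    rw [← hfx, hs4]
    exact hmemC _ _ _ _
  · -- injective
    rw [← LinearMap.ker_eq_bot, eq_bot_iff]
    rintro ⟨x, hx⟩ hker
    obtain ⟨α, β, γ, δ, hfx⟩ := (hmem x).mp hx
    rw [LinearMap.mem_ker, key α β γ δ x hx hfx] at hker
    obtain ⟨h0, h1, h2, h3⟩ := hE04 _ _ _ _ hker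
    rw [Submodule.mem_bot, Submodule.mk_eq_zero]
    rw [← hfx, h0, h1, h2, h3]
    simp
  · -- multiplicative
    intro x y hx hy hxy
    obtain ⟨α, β, γ, δ, hfx⟩ := (hmem x).mp hx
    obtain ⟨α', β', γ', δ', hgy⟩ := (hmem y).mp hy
    rw [key α β γ δ x hx hfx, key α' β' γ' δ' y hy hgy,
      key (α * α') (α * β') (γ * α') (β * γ' + α * δ' + δ * α') (x * y) hxy
        (by rw [← hfx, ← hgy]; exact (hmul4 α β γ δ α' β' γ' δ').symm),
      hEmul]
  · -- intertwines involutions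
    intro x hx hsx
    obtain ⟨α, β, γ, δ, hfx⟩ := (hmem x).mp hx
    rw [key α β γ δ x hx hfx,
      key α γ β δ (s x) hsx (by rw [← hfx, hs4]),
      hρ4]
  · exact (key 1 0 0 0 u _ (by simp)).trans (by module)
  · exact (key 0 1 0 0 a _ (by simp)).trans (by module)
  · exact (key 0 0 1 0 (s a) _ (by simp)).trans (by module)
  · exact (key 0 0 0 1 (a * s a) _ (by simp)).trans (by module)
  · -- range
    apply le_antisymm
    · rintro M ⟨⟨x, hx⟩, rfl⟩
      obtain ⟨α, β, γ, δ, hfx⟩ := (hmem x).mp hx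
      rw [key α β γ δ x hx hfx]
      refine Submodule.add_mem _ (Submodule.add_mem _ (Submodule.add_mem _ ?_ ?_) ?_) ?_ <;>
        exact Submodule.smul_mem _ _ (Submodule.subset_span (by simp))
    · rw [Submodule.span_le]
      rintro M (rfl | rfl | rfl | rfl)
      · exact ⟨⟨u, (hmem u).mpr ⟨1, 0, 0, 0, by simp⟩⟩,
          (key 1 0 0 0 u _ (by simp)).trans (by module)⟩
      · exact ⟨⟨a, (hmem a).mpr ⟨0, 1, 0, 0, by simp⟩⟩,
          (key 0 1 0 0 a _ (by simp)).trans (by module)⟩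
      · exact ⟨⟨s a, (hmem (s a)).mpr ⟨0, 0, 1, 0, by simp⟩⟩,
          (key 0 0 1 0 (s a) _ (by simp)).trans (by module)⟩
      · exact ⟨⟨a * s a, (hmem (a * s a)).mpr ⟨0, 0, 0, 1, by simp⟩⟩,
          (key 0 0 0 1 (a * s a) _ (by simp)).trans (by module)⟩
end
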